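/- arXiv:2510.25511 — 3 statements merged into one kernel-verified Lean document; each statement's English description precedes it below -/
import Mathlib

section
/- Let g be the Lie algebra 23457A with structure equations de^1=de^2=0, de^3=-e^{12}, de^4=-e^{13}, de^5=-e^{14}, de^6=-e^{15}, de^7=-e^{23}. Then every closed 4-form on g (i.e., every κ ∈ Λ⁴g* with dκ=0) lies in the subspace ⟨e^1,e^2⟩∧Λ³g*, that is, κ∧e^1∧e^2=0 for every closed 4-form κ. -/
noncomputable section

/-- We model the dual `g*` of a 7-dimensional real Lie algebra on `ℝ⁷`. -/
abbrev V7 : Type := Fin 7 → ℝ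

/-- The exterior algebra `Λ•g*` of forms. -/
abbrev E7 : Type := ExteriorAlgebra ℝ V7

/-- The generators `e^1, …, e^7` (indexed `0, …, 6`). -/
def ε (i : Fin 7) : E7 := ExteriorAlgebra.ι ℝ (Pi.single i 1)

/-- The degree-`k` component `Λ^k g*` of the exterior algebra. -/
def deg (k : ℕ) : Submodule ℝ E7 :=
  LinearMap.range (ExteriorAlgebra.ι ℝ : V7 →ₗ[ℝ] E7) ^ k

/-- Dualization `g → g**` induced by the standard basis (identifying `g ≅ ℝ⁷`). -/
def dualize : V7 →ₗ[ℝ] Module.Dual ℝ V7 := (Pi.basisFun ℝ (Fin 7)).toDual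

/-- Interior product (contraction) `ι_v` of forms with a vector `v ∈ g`. -/
def ic (v : V7) : E7 →ₗ[ℝ] E7 := CliffordAlgebra.contractLeft (dualize v)

lemma ic_sq (v : V7) : (ic v) * (ic v) = 0 := by
  ext x
  simp [ic, Module.End.mul_apply, CliffordAlgebra.contractLeft_contractLeft]

/-- Contraction of forms by multivectors (identified with elements of `E7` via the
basis), extended multiplicatively from contraction by vectors. -/
def contra : E7 →ₐ[ℝ] Module.End ℝ E7 :=
  ExteriorAlgebra.lift ℝ
    ⟨{ toFun := ic,
       map_add' := by intro a b; ext x; simp [ic],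
       map_smul' := by intro c a; ext x; simp [ic] }, fun v => ic_sq v⟩

/-- The standard volume form `e^{1234567}`. -/
def vol7 : E7 := ε 0 * ε 1 * ε 2 * ε 3 * ε 4 * ε 5 * ε 6

/-- The standard `G₂` 3-form
`φ₀ = e^{127}+e^{347}+e^{567}+e^{135}-e^{146}-e^{236}-e^{245}`. -/
def phi0 : E7 :=
  ε 0*ε 1*ε 6 + ε 2*ε 3*ε 6 + ε 4*ε 5*ε 6 + ε 0*ε 2*ε 4
    - ε 0*ε 3*ε 5 - ε 1*ε 2*ε 5 - ε 1*ε 3*ε 4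

/-- The standard `G₂` 4-form
`σ₀ = e^{3456}+e^{1256}+e^{1234}+e^{2467}-e^{2357}-e^{1457}-e^{1367}` (the Hodge dual
of `φ₀` for the Euclidean metric and standard orientation). -/
def sigma0 : E7 :=
  ε 2*ε 3*ε 4*ε 5 + ε 0*ε 1*ε 4*ε 5 + ε 0*ε 1*ε 2*ε 3 + ε 1*ε 3*ε 5*ε 6
    - ε 1*ε 2*ε 4*ε 6 - ε 0*ε 3*ε 4*ε 6 - ε 0*ε 2*ε 5*ε 6

/-- A 4-form is positive (stable) if it lies in the `GL(7,ℝ)`-orbit of the standard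
`G₂` 4-form `σ₀`. -/
def Positive4 (σ : E7) : Prop :=
  ∃ A : V7 ≃ₗ[ℝ] V7, ExteriorAlgebra.map (A.toLinearMap) sigma0 = σ

/-- `IsCE dg D` says that `D` is the Chevalley–Eilenberg differential, extended as an
odd (degree-1) derivation to `Λ•g*`, of the Lie algebra whose structure equations are
`d e^i = dg i`: it kills constants and satisfies the graded Leibniz rule against
degree-one elements (this characterizes `D` uniquely). -/
def IsCE (dg : Fin 7 → E7) (D : E7 →ₗ[ℝ] E7) : Prop :=
  D 1 = 0 ∧ ∀ (i : Fin 7) (y : E7), D (ε i * y) = dg i * y - ε i * D y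

/-- Structure equations of the Lie algebra `23457A`:
`de^1 = de^2 = 0`, `de^3 = -e^{12}`, `de^4 = -e^{13}`, `de^5 = -e^{14}`,
`de^6 = -e^{15}`, `de^7 = -e^{23}`. -/
def dg23457A : Fin 7 → E7 :=
  ![0, 0, -(ε 0 * ε 1), -(ε 0 * ε 2), -(ε 0 * ε 3), -(ε 0 * ε 4), -(ε 1 * ε 2)]

namespace Aux

lemma dual_eval (a i : Fin 7) : dualize (Pi.single a 1) (Pi.single i 1) = if a = i then 1 else 0 := by
  rw [dualize, show (Pi.single a 1 : V7) = (Pi.basisFun ℝ (Fin 7)) a from (Pi.basisFun_apply ℝ _ a).symm,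
    show (Pi.single i 1 : V7) = (Pi.basisFun ℝ (Fin 7)) i from (Pi.basisFun_apply ℝ _ i).symm,
    Module.Basis.toDual_apply]

/-- contraction with the `a`-th basis vector -/
abbrev iv (a : Fin 7) : E7 →ₗ[ℝ] E7 := ic (Pi.single a 1)

@[simp] lemma iv_mul (a i : Fin 7) (x : E7) :
    iv a (ε i * x) = (if a = i then (1:ℝ) else 0) • x - ε i * iv a x := by
  rw [iv, ic, ε, ExteriorAlgebra.ι, CliffordAlgebra.contractLeft_ι_mul, dual_eval]

@[simp] lemma iv_one (a : Fin 7) : iv a 1 = 0 := CliffordAlgebra.contractLeft_one _ _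

@[simp] lemma iv_eps (a i : Fin 7) : iv a (ε i) = (if a = i then (1:ℝ) else 0) • 1 := by
  have := iv_mul a i 1
  simpa using this

@[simp] lemma eps_sq (i : Fin 7) : ε i * ε i = 0 := ExteriorAlgebra.ι_sq_zero _

@[simp] lemma eps_sq' (i : Fin 7) (x : E7) : ε i * (ε i * x) = 0 := by
  rw [← mul_assoc, eps_sq, zero_mul]

lemma eps_swap_base (i j : Fin 7) : ε i * ε j = -(ε j * ε i) := by
  have := ExteriorAlgebra.ι_add_mul_swap (R := ℝ) (Pi.single i 1 : V7) (Pi.single j 1)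
  rw [ε, ε]
  linear_combination (norm := noncomm_ring) this

@[simp] lemma eps_swap {i j : Fin 7} (_h : j < i) : ε i * ε j = -(ε j * ε i) :=
  eps_swap_base i j

@[simp] lemma eps_swap' {i j : Fin 7} (_h : j < i) (x : E7) :
    ε i * (ε j * x) = -(ε j * (ε i * x)) := by
  rw [← mul_assoc, eps_swap_base, ← mul_assoc]
  noncomm_ring

@[simp] lemma dgv0 : dg23457A 0 = 0 := rfl
@[simp] lemma dgv1 : dg23457A 1 = 0 := rfl
@[simp] lemma dgv2 : dg23457A 2 = -(ε 0 * ε 1) := rfl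
@[simp] lemma dgv3 : dg23457A 3 = -(ε 0 * ε 2) := rfl
@[simp] lemma dgv4 : dg23457A 4 = -(ε 0 * ε 3) := rfl
@[simp] lemma dgv5 : dg23457A 5 = -(ε 0 * ε 4) := rfl
@[simp] lemma dgv6 : dg23457A 6 = -(ε 1 * ε 2) := rfl

def cf (p q r s t : Fin 7) : E7 →ₗ[ℝ] E7 := iv p ∘ₗ (iv q ∘ₗ (iv r ∘ₗ (iv s ∘ₗ iv t)))

def W2345 : E7 := ε 0*(ε 1*(ε 2*(ε 3*(ε 4*ε 5))))
def W2346 : E7 := ε 0*(ε 1*(ε 2*(ε 3*(ε 4*ε 6))))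
def W2356 : E7 := ε 0*(ε 1*(ε 2*(ε 3*(ε 5*ε 6))))
def W2456 : E7 := ε 0*(ε 1*(ε 2*(ε 4*(ε 5*ε 6))))
def W3456 : E7 := ε 0*(ε 1*(ε 3*(ε 4*(ε 5*ε 6))))

/-- The correction operator: reconstructs `x ∧ e¹ ∧ e²` from `D x` for 4-forms `x`. -/
def TT : E7 →ₗ[ℝ] E7 :=
  -((LinearMap.mulRight ℝ W2345) ∘ₗ cf 0 1 3 4 5)
  + ((LinearMap.mulRight ℝ W2346) ∘ₗ cf 0 1 2 5 6)
  - ((LinearMap.mulRight ℝ W2346) ∘ₗ cf 0 1 3 4 6)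
  - ((LinearMap.mulRight ℝ W2356) ∘ₗ cf 0 2 3 4 6)
  - ((LinearMap.mulRight ℝ W2456) ∘ₗ cf 0 1 4 5 6)
  - ((LinearMap.mulRight ℝ W3456) ∘ₗ cf 0 2 4 5 6)

lemma eps_of_basis (j : Fin 7) : ExteriorAlgebra.ι ℝ ((Pi.basisFun ℝ (Fin 7)) j) = ε j := by
  rw [Pi.basisFun_apply]; rfl

section
variable (D : E7 →ₗ[ℝ] E7) (hD : IsCE dg23457A D)
include hD

lemma D_eps (i : Fin 7) : D (ε i) = dg23457A i := by
  have := hD.2 i 1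
  simpa [hD.1] using this

set_option maxHeartbeats 2000000 in
lemma key4 (a b c d : Fin 7) (hab : a < b) (hbc : b < c) (hcd : c < d) :
    (ε a*(ε b*(ε c*ε d))) * (ε 0*ε 1) = TT (D (ε a*(ε b*(ε c*ε d)))) := by
  fin_cases a <;> fin_cases b <;> (try exact absurd hab (by decide)) <;>
    fin_cases c <;> (try exact absurd hbc (by decide)) <;>
    fin_cases d <;> (try exact absurd hcd (by decide)) <;>
  · simp only [mul_one, hD.2, D_eps D hD]
    simp [TT, cf, W2345, W2346, W2356, W2456, W3456, mul_assoc, sub_mul, mul_sub, neg_mul,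
      mul_neg, smul_mul_assoc, mul_smul_comm]

lemma main : ∀ κ ∈ deg 4, κ * (ε 0 * ε 1) = TT (D κ) := by
  have hsp : deg 4 ≤ LinearMap.ker
      (LinearMap.mulRight ℝ (ε 0 * ε 1) - TT ∘ₗ D) := by
    set L : E7 →ₗ[ℝ] E7 := LinearMap.mulRight ℝ (ε 0 * ε 1) - TT ∘ₗ D with hL
    have hG : L.compAlternatingMap (ExteriorAlgebra.ιMulti ℝ 4)
        = (0 : V7 [⋀^Fin 4]→ₗ[ℝ] E7) := by
      apply Module.Basis.ext_alternating (Pi.basisFun ℝ (Fin 7))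
      intro w hw
      set σ := Tuple.sort w with hσ
      have hmono : Monotone (w ∘ σ) := Tuple.monotone_sort w
      have hsm : StrictMono (w ∘ σ) :=
        hmono.strictMono_of_injective (hw.comp σ.injective)
      have hkey : (L.compAlternatingMap (ExteriorAlgebra.ιMulti ℝ 4))
          (fun i => (Pi.basisFun ℝ (Fin 7)) ((w ∘ σ) i)) = 0 := by
        have h01 : (w ∘ σ) 0 < (w ∘ σ) 1 := hsm (by decide)
        have h12 : (w ∘ σ) 1 < (w ∘ σ) 2 := hsm (by decide)
        have h23 : (w ∘ σ) 2 < (w ∘ σ) 3 := hsm (by decide)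
        have hexp : (ExteriorAlgebra.ιMulti ℝ 4)
            (fun i => (Pi.basisFun ℝ (Fin 7)) ((w ∘ σ) i))
            = ε ((w ∘ σ) 0) * (ε ((w ∘ σ) 1) * (ε ((w ∘ σ) 2) * ε ((w ∘ σ) 3))) := by
          rw [ExteriorAlgebra.ιMulti_apply]
          simp [List.ofFn_succ, eps_of_basis]
          rfl
        rw [LinearMap.compAlternatingMap_apply, hexp, hL]
        simp only [LinearMap.sub_apply, LinearMap.mulRight_apply, LinearMap.comp_apply]
        rw [sub_eq_zero]
        exact key4 D hD _ _ _ _ h01 h12 h23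
      have hvw : (fun i => (Pi.basisFun ℝ (Fin 7)) (w i))
          = (fun i => (Pi.basisFun ℝ (Fin 7)) ((w ∘ σ) i)) ∘ ⇑σ⁻¹ := by
        funext i
        simp
      rw [hvw, AlternatingMap.map_perm, hkey, smul_zero]
      simp
    rw [show deg 4 = ⋀[ℝ]^4 V7 from rfl, ← ExteriorAlgebra.ιMulti_span_fixedDegree,
      Submodule.span_le]
    rintro _ ⟨v, rfl⟩
    have := congrArg (fun f => f v) hG
    simpa [LinearMap.mem_ker] using this
  intro κ hκ
  have := hsp hκ
  rw [LinearMap.mem_ker, LinearMap.sub_apply, LinearMap.mulRight_apply,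
    LinearMap.comp_apply, sub_eq_zero] at this
  exact this

end
end Aux

/-- every closed 4-form `κ` on `23457A` lies in `⟨e^1,e^2⟩ ∧ Λ³g*`,
equivalently `κ ∧ e^1 ∧ e^2 = 0`. -/
theorem stmt3_23457A_closed_fourforms (D : E7 →ₗ[ℝ] E7) (hD : IsCE dg23457A D) :
    ∀ κ ∈ deg 4, D κ = 0 → κ * (ε 0 * ε 1) = 0 := by
  intro κ hκ hcl
  have h := Aux.main D hD κ hκ
  rw [hcl, map_zero] at h
  exact h
end
end

section
/- A 7-dimensional Lie algebra g admitting a basis in which every closed 4-form lies in ⟨e^1,e^2⟩∧Λ³g* admits no coclosed G₂-structure. Concretely: if every closed κ ∈ Λ⁴g* satisfies κ = e^1∧α + e^2∧β for some α,β ∈ Λ³g*, then there is no 3-form φ ∈ Λ³g* which is positive (i.e., equivalent under GL(7,ℝ) to the standard G₂ 3-form) and satisfies d(*_φ φ)=0. -/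
noncomputable section

open ExteriorAlgebra in
lemma g2_dualize_single (j : Fin 7) (x : V7) : dualize (Pi.single j 1) x = x j := by
  have h : (Pi.single j 1 : V7) = Pi.basisFun ℝ (Fin 7) j := by
    simp [Pi.basisFun_apply]
  rw [dualize, h, Module.Basis.toDual_apply_right, Pi.basisFun_repr]

lemma g2_ic_basis_mul (j : Fin 7) (x : V7) (y : E7) :
    ic (Pi.single j 1) (ExteriorAlgebra.ι ℝ x * y)
      = x j • y - ExteriorAlgebra.ι ℝ x * ic (Pi.single j 1) y := by
  rw [ic, CliffordAlgebra.contractLeft_ι_mul, g2_dualize_single]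

lemma g2_ic_basis_iota (j : Fin 7) (x : V7) :
    ic (Pi.single j 1) (ExteriorAlgebra.ι ℝ x) = algebraMap ℝ E7 (x j) := by
  rw [ic, CliffordAlgebra.contractLeft_ι, g2_dualize_single]

lemma g2_aI_iota (x : V7) : ExteriorAlgebra.algebraMapInv (ExteriorAlgebra.ι ℝ x) = (0:ℝ) := by
  simp [ExteriorAlgebra.algebraMapInv]

lemma g2_aI_iota_mul (x : V7) (y : E7) :
    ExteriorAlgebra.algebraMapInv (ExteriorAlgebra.ι ℝ x * y) = (0:ℝ) := by
  rw [map_mul, g2_aI_iota, zero_mul]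

lemma g2_aI_eps_mul (i : Fin 7) (y : E7) :
    ExteriorAlgebra.algebraMapInv (ε i * y) = (0:ℝ) := by
  rw [ε]; exact g2_aI_iota_mul _ _

lemma g2_aI_eps (i : Fin 7) : ExteriorAlgebra.algebraMapInv (ε i) = (0:ℝ) := by
  rw [ε]; exact g2_aI_iota _

lemma g2_aI_aM (r : ℝ) : ExteriorAlgebra.algebraMapInv (algebraMap ℝ E7 r) = r :=
  ExteriorAlgebra.algebraMap_leftInverse _ r


lemma g2icm00 (y : E7) : ic (Pi.single (0:Fin 7) 1) (ε 0 * y) = y - ε 0 * ic (Pi.single (0:Fin 7) 1) y := by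
  rw [ε, g2_ic_basis_mul, Pi.single_eq_same, one_smul]

lemma g2ice00 : ic (Pi.single (0:Fin 7) 1) (ε 0) = algebraMap ℝ E7 1 := by
  rw [ε, g2_ic_basis_iota, Pi.single_eq_same]

lemma g2icm01 (y : E7) : ic (Pi.single (1:Fin 7) 1) (ε 0 * y) = - (ε 0 * ic (Pi.single (1:Fin 7) 1) y) := by
  rw [ε, g2_ic_basis_mul, Pi.single_eq_of_ne (by decide), zero_smul, zero_sub]

lemma g2ice01 : ic (Pi.single (1:Fin 7) 1) (ε 0) = 0 := by
  rw [ε, g2_ic_basis_iota, Pi.single_eq_of_ne (by decide), map_zero]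

lemma g2icm02 (y : E7) : ic (Pi.single (2:Fin 7) 1) (ε 0 * y) = - (ε 0 * ic (Pi.single (2:Fin 7) 1) y) := by
  rw [ε, g2_ic_basis_mul, Pi.single_eq_of_ne (by decide), zero_smul, zero_sub]

lemma g2ice02 : ic (Pi.single (2:Fin 7) 1) (ε 0) = 0 := by
  rw [ε, g2_ic_basis_iota, Pi.single_eq_of_ne (by decide), map_zero]

lemma g2icm03 (y : E7) : ic (Pi.single (3:Fin 7) 1) (ε 0 * y) = - (ε 0 * ic (Pi.single (3:Fin 7) 1) y) := by
  rw [ε, g2_ic_basis_mul, Pi.single_eq_of_ne (by decide), zero_smul, zero_sub]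

lemma g2ice03 : ic (Pi.single (3:Fin 7) 1) (ε 0) = 0 := by
  rw [ε, g2_ic_basis_iota, Pi.single_eq_of_ne (by decide), map_zero]

lemma g2icm04 (y : E7) : ic (Pi.single (4:Fin 7) 1) (ε 0 * y) = - (ε 0 * ic (Pi.single (4:Fin 7) 1) y) := by
  rw [ε, g2_ic_basis_mul, Pi.single_eq_of_ne (by decide), zero_smul, zero_sub]

lemma g2ice04 : ic (Pi.single (4:Fin 7) 1) (ε 0) = 0 := by
  rw [ε, g2_ic_basis_iota, Pi.single_eq_of_ne (by decide), map_zero]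

lemma g2icm05 (y : E7) : ic (Pi.single (5:Fin 7) 1) (ε 0 * y) = - (ε 0 * ic (Pi.single (5:Fin 7) 1) y) := by
  rw [ε, g2_ic_basis_mul, Pi.single_eq_of_ne (by decide), zero_smul, zero_sub]

lemma g2ice05 : ic (Pi.single (5:Fin 7) 1) (ε 0) = 0 := by
  rw [ε, g2_ic_basis_iota, Pi.single_eq_of_ne (by decide), map_zero]

lemma g2icm06 (y : E7) : ic (Pi.single (6:Fin 7) 1) (ε 0 * y) = - (ε 0 * ic (Pi.single (6:Fin 7) 1) y) := by
  rw [ε, g2_ic_basis_mul, Pi.single_eq_of_ne (by decide), zero_smul, zero_sub]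

lemma g2ice06 : ic (Pi.single (6:Fin 7) 1) (ε 0) = 0 := by
  rw [ε, g2_ic_basis_iota, Pi.single_eq_of_ne (by decide), map_zero]

lemma g2icm10 (y : E7) : ic (Pi.single (0:Fin 7) 1) (ε 1 * y) = - (ε 1 * ic (Pi.single (0:Fin 7) 1) y) := by
  rw [ε, g2_ic_basis_mul, Pi.single_eq_of_ne (by decide), zero_smul, zero_sub]

lemma g2ice10 : ic (Pi.single (0:Fin 7) 1) (ε 1) = 0 := by
  rw [ε, g2_ic_basis_iota, Pi.single_eq_of_ne (by decide), map_zero]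

lemma g2icm11 (y : E7) : ic (Pi.single (1:Fin 7) 1) (ε 1 * y) = y - ε 1 * ic (Pi.single (1:Fin 7) 1) y := by
  rw [ε, g2_ic_basis_mul, Pi.single_eq_same, one_smul]

lemma g2ice11 : ic (Pi.single (1:Fin 7) 1) (ε 1) = algebraMap ℝ E7 1 := by
  rw [ε, g2_ic_basis_iota, Pi.single_eq_same]

lemma g2icm12 (y : E7) : ic (Pi.single (2:Fin 7) 1) (ε 1 * y) = - (ε 1 * ic (Pi.single (2:Fin 7) 1) y) := by
  rw [ε, g2_ic_basis_mul, Pi.single_eq_of_ne (by decide), zero_smul, zero_sub]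

lemma g2ice12 : ic (Pi.single (2:Fin 7) 1) (ε 1) = 0 := by
  rw [ε, g2_ic_basis_iota, Pi.single_eq_of_ne (by decide), map_zero]

lemma g2icm13 (y : E7) : ic (Pi.single (3:Fin 7) 1) (ε 1 * y) = - (ε 1 * ic (Pi.single (3:Fin 7) 1) y) := by
  rw [ε, g2_ic_basis_mul, Pi.single_eq_of_ne (by decide), zero_smul, zero_sub]

lemma g2ice13 : ic (Pi.single (3:Fin 7) 1) (ε 1) = 0 := by
  rw [ε, g2_ic_basis_iota, Pi.single_eq_of_ne (by decide), map_zero]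

lemma g2icm14 (y : E7) : ic (Pi.single (4:Fin 7) 1) (ε 1 * y) = - (ε 1 * ic (Pi.single (4:Fin 7) 1) y) := by
  rw [ε, g2_ic_basis_mul, Pi.single_eq_of_ne (by decide), zero_smul, zero_sub]

lemma g2ice14 : ic (Pi.single (4:Fin 7) 1) (ε 1) = 0 := by
  rw [ε, g2_ic_basis_iota, Pi.single_eq_of_ne (by decide), map_zero]

lemma g2icm15 (y : E7) : ic (Pi.single (5:Fin 7) 1) (ε 1 * y) = - (ε 1 * ic (Pi.single (5:Fin 7) 1) y) := by
  rw [ε, g2_ic_basis_mul, Pi.single_eq_of_ne (by decide), zero_smul, zero_sub]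

lemma g2ice15 : ic (Pi.single (5:Fin 7) 1) (ε 1) = 0 := by
  rw [ε, g2_ic_basis_iota, Pi.single_eq_of_ne (by decide), map_zero]

lemma g2icm16 (y : E7) : ic (Pi.single (6:Fin 7) 1) (ε 1 * y) = - (ε 1 * ic (Pi.single (6:Fin 7) 1) y) := by
  rw [ε, g2_ic_basis_mul, Pi.single_eq_of_ne (by decide), zero_smul, zero_sub]

lemma g2ice16 : ic (Pi.single (6:Fin 7) 1) (ε 1) = 0 := by
  rw [ε, g2_ic_basis_iota, Pi.single_eq_of_ne (by decide), map_zero]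

lemma g2icm20 (y : E7) : ic (Pi.single (0:Fin 7) 1) (ε 2 * y) = - (ε 2 * ic (Pi.single (0:Fin 7) 1) y) := by
  rw [ε, g2_ic_basis_mul, Pi.single_eq_of_ne (by decide), zero_smul, zero_sub]

lemma g2ice20 : ic (Pi.single (0:Fin 7) 1) (ε 2) = 0 := by
  rw [ε, g2_ic_basis_iota, Pi.single_eq_of_ne (by decide), map_zero]

lemma g2icm21 (y : E7) : ic (Pi.single (1:Fin 7) 1) (ε 2 * y) = - (ε 2 * ic (Pi.single (1:Fin 7) 1) y) := by
  rw [ε, g2_ic_basis_mul, Pi.single_eq_of_ne (by decide), zero_smul, zero_sub]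

lemma g2ice21 : ic (Pi.single (1:Fin 7) 1) (ε 2) = 0 := by
  rw [ε, g2_ic_basis_iota, Pi.single_eq_of_ne (by decide), map_zero]

lemma g2icm22 (y : E7) : ic (Pi.single (2:Fin 7) 1) (ε 2 * y) = y - ε 2 * ic (Pi.single (2:Fin 7) 1) y := by
  rw [ε, g2_ic_basis_mul, Pi.single_eq_same, one_smul]

lemma g2ice22 : ic (Pi.single (2:Fin 7) 1) (ε 2) = algebraMap ℝ E7 1 := by
  rw [ε, g2_ic_basis_iota, Pi.single_eq_same]

lemma g2icm23 (y : E7) : ic (Pi.single (3:Fin 7) 1) (ε 2 * y) = - (ε 2 * ic (Pi.single (3:Fin 7) 1) y) := by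
  rw [ε, g2_ic_basis_mul, Pi.single_eq_of_ne (by decide), zero_smul, zero_sub]

lemma g2ice23 : ic (Pi.single (3:Fin 7) 1) (ε 2) = 0 := by
  rw [ε, g2_ic_basis_iota, Pi.single_eq_of_ne (by decide), map_zero]

lemma g2icm24 (y : E7) : ic (Pi.single (4:Fin 7) 1) (ε 2 * y) = - (ε 2 * ic (Pi.single (4:Fin 7) 1) y) := by
  rw [ε, g2_ic_basis_mul, Pi.single_eq_of_ne (by decide), zero_smul, zero_sub]

lemma g2ice24 : ic (Pi.single (4:Fin 7) 1) (ε 2) = 0 := by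
  rw [ε, g2_ic_basis_iota, Pi.single_eq_of_ne (by decide), map_zero]

lemma g2icm25 (y : E7) : ic (Pi.single (5:Fin 7) 1) (ε 2 * y) = - (ε 2 * ic (Pi.single (5:Fin 7) 1) y) := by
  rw [ε, g2_ic_basis_mul, Pi.single_eq_of_ne (by decide), zero_smul, zero_sub]

lemma g2ice25 : ic (Pi.single (5:Fin 7) 1) (ε 2) = 0 := by
  rw [ε, g2_ic_basis_iota, Pi.single_eq_of_ne (by decide), map_zero]

lemma g2icm26 (y : E7) : ic (Pi.single (6:Fin 7) 1) (ε 2 * y) = - (ε 2 * ic (Pi.single (6:Fin 7) 1) y) := by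
  rw [ε, g2_ic_basis_mul, Pi.single_eq_of_ne (by decide), zero_smul, zero_sub]

lemma g2ice26 : ic (Pi.single (6:Fin 7) 1) (ε 2) = 0 := by
  rw [ε, g2_ic_basis_iota, Pi.single_eq_of_ne (by decide), map_zero]

lemma g2icm30 (y : E7) : ic (Pi.single (0:Fin 7) 1) (ε 3 * y) = - (ε 3 * ic (Pi.single (0:Fin 7) 1) y) := by
  rw [ε, g2_ic_basis_mul, Pi.single_eq_of_ne (by decide), zero_smul, zero_sub]

lemma g2ice30 : ic (Pi.single (0:Fin 7) 1) (ε 3) = 0 := by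
  rw [ε, g2_ic_basis_iota, Pi.single_eq_of_ne (by decide), map_zero]

lemma g2icm31 (y : E7) : ic (Pi.single (1:Fin 7) 1) (ε 3 * y) = - (ε 3 * ic (Pi.single (1:Fin 7) 1) y) := by
  rw [ε, g2_ic_basis_mul, Pi.single_eq_of_ne (by decide), zero_smul, zero_sub]

lemma g2ice31 : ic (Pi.single (1:Fin 7) 1) (ε 3) = 0 := by
  rw [ε, g2_ic_basis_iota, Pi.single_eq_of_ne (by decide), map_zero]

lemma g2icm32 (y : E7) : ic (Pi.single (2:Fin 7) 1) (ε 3 * y) = - (ε 3 * ic (Pi.single (2:Fin 7) 1) y) := by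
  rw [ε, g2_ic_basis_mul, Pi.single_eq_of_ne (by decide), zero_smul, zero_sub]

lemma g2ice32 : ic (Pi.single (2:Fin 7) 1) (ε 3) = 0 := by
  rw [ε, g2_ic_basis_iota, Pi.single_eq_of_ne (by decide), map_zero]

lemma g2icm33 (y : E7) : ic (Pi.single (3:Fin 7) 1) (ε 3 * y) = y - ε 3 * ic (Pi.single (3:Fin 7) 1) y := by
  rw [ε, g2_ic_basis_mul, Pi.single_eq_same, one_smul]

lemma g2ice33 : ic (Pi.single (3:Fin 7) 1) (ε 3) = algebraMap ℝ E7 1 := by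
  rw [ε, g2_ic_basis_iota, Pi.single_eq_same]

lemma g2icm34 (y : E7) : ic (Pi.single (4:Fin 7) 1) (ε 3 * y) = - (ε 3 * ic (Pi.single (4:Fin 7) 1) y) := by
  rw [ε, g2_ic_basis_mul, Pi.single_eq_of_ne (by decide), zero_smul, zero_sub]

lemma g2ice34 : ic (Pi.single (4:Fin 7) 1) (ε 3) = 0 := by
  rw [ε, g2_ic_basis_iota, Pi.single_eq_of_ne (by decide), map_zero]

lemma g2icm35 (y : E7) : ic (Pi.single (5:Fin 7) 1) (ε 3 * y) = - (ε 3 * ic (Pi.single (5:Fin 7) 1) y) := by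
  rw [ε, g2_ic_basis_mul, Pi.single_eq_of_ne (by decide), zero_smul, zero_sub]

lemma g2ice35 : ic (Pi.single (5:Fin 7) 1) (ε 3) = 0 := by
  rw [ε, g2_ic_basis_iota, Pi.single_eq_of_ne (by decide), map_zero]

lemma g2icm36 (y : E7) : ic (Pi.single (6:Fin 7) 1) (ε 3 * y) = - (ε 3 * ic (Pi.single (6:Fin 7) 1) y) := by
  rw [ε, g2_ic_basis_mul, Pi.single_eq_of_ne (by decide), zero_smul, zero_sub]

lemma g2ice36 : ic (Pi.single (6:Fin 7) 1) (ε 3) = 0 := by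
  rw [ε, g2_ic_basis_iota, Pi.single_eq_of_ne (by decide), map_zero]

lemma g2icm40 (y : E7) : ic (Pi.single (0:Fin 7) 1) (ε 4 * y) = - (ε 4 * ic (Pi.single (0:Fin 7) 1) y) := by
  rw [ε, g2_ic_basis_mul, Pi.single_eq_of_ne (by decide), zero_smul, zero_sub]

lemma g2ice40 : ic (Pi.single (0:Fin 7) 1) (ε 4) = 0 := by
  rw [ε, g2_ic_basis_iota, Pi.single_eq_of_ne (by decide), map_zero]

lemma g2icm41 (y : E7) : ic (Pi.single (1:Fin 7) 1) (ε 4 * y) = - (ε 4 * ic (Pi.single (1:Fin 7) 1) y) := by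
  rw [ε, g2_ic_basis_mul, Pi.single_eq_of_ne (by decide), zero_smul, zero_sub]

lemma g2ice41 : ic (Pi.single (1:Fin 7) 1) (ε 4) = 0 := by
  rw [ε, g2_ic_basis_iota, Pi.single_eq_of_ne (by decide), map_zero]

lemma g2icm42 (y : E7) : ic (Pi.single (2:Fin 7) 1) (ε 4 * y) = - (ε 4 * ic (Pi.single (2:Fin 7) 1) y) := by
  rw [ε, g2_ic_basis_mul, Pi.single_eq_of_ne (by decide), zero_smul, zero_sub]

lemma g2ice42 : ic (Pi.single (2:Fin 7) 1) (ε 4) = 0 := by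
  rw [ε, g2_ic_basis_iota, Pi.single_eq_of_ne (by decide), map_zero]

lemma g2icm43 (y : E7) : ic (Pi.single (3:Fin 7) 1) (ε 4 * y) = - (ε 4 * ic (Pi.single (3:Fin 7) 1) y) := by
  rw [ε, g2_ic_basis_mul, Pi.single_eq_of_ne (by decide), zero_smul, zero_sub]

lemma g2ice43 : ic (Pi.single (3:Fin 7) 1) (ε 4) = 0 := by
  rw [ε, g2_ic_basis_iota, Pi.single_eq_of_ne (by decide), map_zero]

lemma g2icm44 (y : E7) : ic (Pi.single (4:Fin 7) 1) (ε 4 * y) = y - ε 4 * ic (Pi.single (4:Fin 7) 1) y := by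
  rw [ε, g2_ic_basis_mul, Pi.single_eq_same, one_smul]

lemma g2ice44 : ic (Pi.single (4:Fin 7) 1) (ε 4) = algebraMap ℝ E7 1 := by
  rw [ε, g2_ic_basis_iota, Pi.single_eq_same]

lemma g2icm45 (y : E7) : ic (Pi.single (5:Fin 7) 1) (ε 4 * y) = - (ε 4 * ic (Pi.single (5:Fin 7) 1) y) := by
  rw [ε, g2_ic_basis_mul, Pi.single_eq_of_ne (by decide), zero_smul, zero_sub]

lemma g2ice45 : ic (Pi.single (5:Fin 7) 1) (ε 4) = 0 := by
  rw [ε, g2_ic_basis_iota, Pi.single_eq_of_ne (by decide), map_zero]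

lemma g2icm46 (y : E7) : ic (Pi.single (6:Fin 7) 1) (ε 4 * y) = - (ε 4 * ic (Pi.single (6:Fin 7) 1) y) := by
  rw [ε, g2_ic_basis_mul, Pi.single_eq_of_ne (by decide), zero_smul, zero_sub]

lemma g2ice46 : ic (Pi.single (6:Fin 7) 1) (ε 4) = 0 := by
  rw [ε, g2_ic_basis_iota, Pi.single_eq_of_ne (by decide), map_zero]

lemma g2icm50 (y : E7) : ic (Pi.single (0:Fin 7) 1) (ε 5 * y) = - (ε 5 * ic (Pi.single (0:Fin 7) 1) y) := by
  rw [ε, g2_ic_basis_mul, Pi.single_eq_of_ne (by decide), zero_smul, zero_sub]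

lemma g2ice50 : ic (Pi.single (0:Fin 7) 1) (ε 5) = 0 := by
  rw [ε, g2_ic_basis_iota, Pi.single_eq_of_ne (by decide), map_zero]

lemma g2icm51 (y : E7) : ic (Pi.single (1:Fin 7) 1) (ε 5 * y) = - (ε 5 * ic (Pi.single (1:Fin 7) 1) y) := by
  rw [ε, g2_ic_basis_mul, Pi.single_eq_of_ne (by decide), zero_smul, zero_sub]

lemma g2ice51 : ic (Pi.single (1:Fin 7) 1) (ε 5) = 0 := by
  rw [ε, g2_ic_basis_iota, Pi.single_eq_of_ne (by decide), map_zero]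

lemma g2icm52 (y : E7) : ic (Pi.single (2:Fin 7) 1) (ε 5 * y) = - (ε 5 * ic (Pi.single (2:Fin 7) 1) y) := by
  rw [ε, g2_ic_basis_mul, Pi.single_eq_of_ne (by decide), zero_smul, zero_sub]

lemma g2ice52 : ic (Pi.single (2:Fin 7) 1) (ε 5) = 0 := by
  rw [ε, g2_ic_basis_iota, Pi.single_eq_of_ne (by decide), map_zero]

lemma g2icm53 (y : E7) : ic (Pi.single (3:Fin 7) 1) (ε 5 * y) = - (ε 5 * ic (Pi.single (3:Fin 7) 1) y) := by
  rw [ε, g2_ic_basis_mul, Pi.single_eq_of_ne (by decide), zero_smul, zero_sub]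

lemma g2ice53 : ic (Pi.single (3:Fin 7) 1) (ε 5) = 0 := by
  rw [ε, g2_ic_basis_iota, Pi.single_eq_of_ne (by decide), map_zero]

lemma g2icm54 (y : E7) : ic (Pi.single (4:Fin 7) 1) (ε 5 * y) = - (ε 5 * ic (Pi.single (4:Fin 7) 1) y) := by
  rw [ε, g2_ic_basis_mul, Pi.single_eq_of_ne (by decide), zero_smul, zero_sub]

lemma g2ice54 : ic (Pi.single (4:Fin 7) 1) (ε 5) = 0 := by
  rw [ε, g2_ic_basis_iota, Pi.single_eq_of_ne (by decide), map_zero]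

lemma g2icm55 (y : E7) : ic (Pi.single (5:Fin 7) 1) (ε 5 * y) = y - ε 5 * ic (Pi.single (5:Fin 7) 1) y := by
  rw [ε, g2_ic_basis_mul, Pi.single_eq_same, one_smul]

lemma g2ice55 : ic (Pi.single (5:Fin 7) 1) (ε 5) = algebraMap ℝ E7 1 := by
  rw [ε, g2_ic_basis_iota, Pi.single_eq_same]

lemma g2icm56 (y : E7) : ic (Pi.single (6:Fin 7) 1) (ε 5 * y) = - (ε 5 * ic (Pi.single (6:Fin 7) 1) y) := by
  rw [ε, g2_ic_basis_mul, Pi.single_eq_of_ne (by decide), zero_smul, zero_sub]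

lemma g2ice56 : ic (Pi.single (6:Fin 7) 1) (ε 5) = 0 := by
  rw [ε, g2_ic_basis_iota, Pi.single_eq_of_ne (by decide), map_zero]

lemma g2icm60 (y : E7) : ic (Pi.single (0:Fin 7) 1) (ε 6 * y) = - (ε 6 * ic (Pi.single (0:Fin 7) 1) y) := by
  rw [ε, g2_ic_basis_mul, Pi.single_eq_of_ne (by decide), zero_smul, zero_sub]

lemma g2ice60 : ic (Pi.single (0:Fin 7) 1) (ε 6) = 0 := by
  rw [ε, g2_ic_basis_iota, Pi.single_eq_of_ne (by decide), map_zero]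

lemma g2icm61 (y : E7) : ic (Pi.single (1:Fin 7) 1) (ε 6 * y) = - (ε 6 * ic (Pi.single (1:Fin 7) 1) y) := by
  rw [ε, g2_ic_basis_mul, Pi.single_eq_of_ne (by decide), zero_smul, zero_sub]

lemma g2ice61 : ic (Pi.single (1:Fin 7) 1) (ε 6) = 0 := by
  rw [ε, g2_ic_basis_iota, Pi.single_eq_of_ne (by decide), map_zero]

lemma g2icm62 (y : E7) : ic (Pi.single (2:Fin 7) 1) (ε 6 * y) = - (ε 6 * ic (Pi.single (2:Fin 7) 1) y) := by
  rw [ε, g2_ic_basis_mul, Pi.single_eq_of_ne (by decide), zero_smul, zero_sub]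

lemma g2ice62 : ic (Pi.single (2:Fin 7) 1) (ε 6) = 0 := by
  rw [ε, g2_ic_basis_iota, Pi.single_eq_of_ne (by decide), map_zero]

lemma g2icm63 (y : E7) : ic (Pi.single (3:Fin 7) 1) (ε 6 * y) = - (ε 6 * ic (Pi.single (3:Fin 7) 1) y) := by
  rw [ε, g2_ic_basis_mul, Pi.single_eq_of_ne (by decide), zero_smul, zero_sub]

lemma g2ice63 : ic (Pi.single (3:Fin 7) 1) (ε 6) = 0 := by
  rw [ε, g2_ic_basis_iota, Pi.single_eq_of_ne (by decide), map_zero]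

lemma g2icm64 (y : E7) : ic (Pi.single (4:Fin 7) 1) (ε 6 * y) = - (ε 6 * ic (Pi.single (4:Fin 7) 1) y) := by
  rw [ε, g2_ic_basis_mul, Pi.single_eq_of_ne (by decide), zero_smul, zero_sub]

lemma g2ice64 : ic (Pi.single (4:Fin 7) 1) (ε 6) = 0 := by
  rw [ε, g2_ic_basis_iota, Pi.single_eq_of_ne (by decide), map_zero]

lemma g2icm65 (y : E7) : ic (Pi.single (5:Fin 7) 1) (ε 6 * y) = - (ε 6 * ic (Pi.single (5:Fin 7) 1) y) := by
  rw [ε, g2_ic_basis_mul, Pi.single_eq_of_ne (by decide), zero_smul, zero_sub]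

lemma g2ice65 : ic (Pi.single (5:Fin 7) 1) (ε 6) = 0 := by
  rw [ε, g2_ic_basis_iota, Pi.single_eq_of_ne (by decide), map_zero]

lemma g2icm66 (y : E7) : ic (Pi.single (6:Fin 7) 1) (ε 6 * y) = y - ε 6 * ic (Pi.single (6:Fin 7) 1) y := by
  rw [ε, g2_ic_basis_mul, Pi.single_eq_same, one_smul]

lemma g2ice66 : ic (Pi.single (6:Fin 7) 1) (ε 6) = algebraMap ℝ E7 1 := by
  rw [ε, g2_ic_basis_iota, Pi.single_eq_same]

set_option maxHeartbeats 2000000 in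
lemma g2coeff0 (u v : V7) :
    ExteriorAlgebra.algebraMapInv (ic (Pi.single (6:Fin 7) 1) (ic (Pi.single (5:Fin 7) 1) (ic (Pi.single (4:Fin 7) 1) (ic (Pi.single (3:Fin 7) 1) (ic (Pi.single (2:Fin 7) 1) (ic (Pi.single (1:Fin 7) 1) (ExteriorAlgebra.ι ℝ u * (ExteriorAlgebra.ι ℝ v * sigma0))))))))
      = (u 1 * v 6 - u 6 * v 1) - (u 2 * v 4 - u 4 * v 2) + (u 3 * v 5 - u 5 * v 3) := by
  simp only [sigma0, mul_add, mul_sub, mul_assoc, map_add, map_sub, map_smul, map_neg,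
    g2_ic_basis_mul, g2_ic_basis_iota,
    g2icm00, g2icm01, g2icm02, g2icm03, g2icm04, g2icm05, g2icm06, g2icm10, g2icm11, g2icm12, g2icm13, g2icm14, g2icm15, g2icm16, g2icm20, g2icm21, g2icm22, g2icm23, g2icm24, g2icm25, g2icm26, g2icm30, g2icm31, g2icm32, g2icm33, g2icm34, g2icm35, g2icm36, g2icm40, g2icm41, g2icm42, g2icm43, g2icm44, g2icm45, g2icm46, g2icm50, g2icm51, g2icm52, g2icm53, g2icm54, g2icm55, g2icm56, g2icm60, g2icm61, g2icm62, g2icm63, g2icm64, g2icm65, g2icm66,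
    g2ice00, g2ice01, g2ice02, g2ice03, g2ice04, g2ice05, g2ice06, g2ice10, g2ice11, g2ice12, g2ice13, g2ice14, g2ice15, g2ice16, g2ice20, g2ice21, g2ice22, g2ice23, g2ice24, g2ice25, g2ice26, g2ice30, g2ice31, g2ice32, g2ice33, g2ice34, g2ice35, g2ice36, g2ice40, g2ice41, g2ice42, g2ice43, g2ice44, g2ice45, g2ice46, g2ice50, g2ice51, g2ice52, g2ice53, g2ice54, g2ice55, g2ice56, g2ice60, g2ice61, g2ice62, g2ice63, g2ice64, g2ice65, g2ice66,
    mul_zero, zero_mul, mul_one, one_mul, sub_zero, zero_sub, add_zero, zero_add,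
    smul_zero, zero_smul, neg_zero, neg_neg, mul_neg, neg_mul, smul_neg,
    mul_smul_comm, smul_mul_assoc, smul_smul, sub_self,
    g2_aI_iota, g2_aI_iota_mul, g2_aI_eps, g2_aI_eps_mul, g2_aI_aM, map_one, map_zero, smul_eq_mul]
  ring

set_option maxHeartbeats 2000000 in
lemma g2coeff1 (u v : V7) :
    ExteriorAlgebra.algebraMapInv (ic (Pi.single (6:Fin 7) 1) (ic (Pi.single (5:Fin 7) 1) (ic (Pi.single (4:Fin 7) 1) (ic (Pi.single (3:Fin 7) 1) (ic (Pi.single (2:Fin 7) 1) (ic (Pi.single (0:Fin 7) 1) (ExteriorAlgebra.ι ℝ u * (ExteriorAlgebra.ι ℝ v * sigma0))))))))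
      = (u 0 * v 6 - u 6 * v 0) - (u 2 * v 5 - u 5 * v 2) - (u 3 * v 4 - u 4 * v 3) := by
  simp only [sigma0, mul_add, mul_sub, mul_assoc, map_add, map_sub, map_smul, map_neg,
    g2_ic_basis_mul, g2_ic_basis_iota,
    g2icm00, g2icm01, g2icm02, g2icm03, g2icm04, g2icm05, g2icm06, g2icm10, g2icm11, g2icm12, g2icm13, g2icm14, g2icm15, g2icm16, g2icm20, g2icm21, g2icm22, g2icm23, g2icm24, g2icm25, g2icm26, g2icm30, g2icm31, g2icm32, g2icm33, g2icm34, g2icm35, g2icm36, g2icm40, g2icm41, g2icm42, g2icm43, g2icm44, g2icm45, g2icm46, g2icm50, g2icm51, g2icm52, g2icm53, g2icm54, g2icm55, g2icm56, g2icm60, g2icm61, g2icm62, g2icm63, g2icm64, g2icm65, g2icm66,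
    g2ice00, g2ice01, g2ice02, g2ice03, g2ice04, g2ice05, g2ice06, g2ice10, g2ice11, g2ice12, g2ice13, g2ice14, g2ice15, g2ice16, g2ice20, g2ice21, g2ice22, g2ice23, g2ice24, g2ice25, g2ice26, g2ice30, g2ice31, g2ice32, g2ice33, g2ice34, g2ice35, g2ice36, g2ice40, g2ice41, g2ice42, g2ice43, g2ice44, g2ice45, g2ice46, g2ice50, g2ice51, g2ice52, g2ice53, g2ice54, g2ice55, g2ice56, g2ice60, g2ice61, g2ice62, g2ice63, g2ice64, g2ice65, g2ice66,
    mul_zero, zero_mul, mul_one, one_mul, sub_zero, zero_sub, add_zero, zero_add,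
    smul_zero, zero_smul, neg_zero, neg_neg, mul_neg, neg_mul, smul_neg,
    mul_smul_comm, smul_mul_assoc, smul_smul, sub_self,
    g2_aI_iota, g2_aI_iota_mul, g2_aI_eps, g2_aI_eps_mul, g2_aI_aM, map_one, map_zero, smul_eq_mul]
  ring

set_option maxHeartbeats 2000000 in
lemma g2coeff2 (u v : V7) :
    ExteriorAlgebra.algebraMapInv (ic (Pi.single (6:Fin 7) 1) (ic (Pi.single (5:Fin 7) 1) (ic (Pi.single (4:Fin 7) 1) (ic (Pi.single (3:Fin 7) 1) (ic (Pi.single (1:Fin 7) 1) (ic (Pi.single (0:Fin 7) 1) (ExteriorAlgebra.ι ℝ u * (ExteriorAlgebra.ι ℝ v * sigma0))))))))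
      = (u 0 * v 4 - u 4 * v 0) - (u 1 * v 5 - u 5 * v 1) + (u 3 * v 6 - u 6 * v 3) := by
  simp only [sigma0, mul_add, mul_sub, mul_assoc, map_add, map_sub, map_smul, map_neg,
    g2_ic_basis_mul, g2_ic_basis_iota,
    g2icm00, g2icm01, g2icm02, g2icm03, g2icm04, g2icm05, g2icm06, g2icm10, g2icm11, g2icm12, g2icm13, g2icm14, g2icm15, g2icm16, g2icm20, g2icm21, g2icm22, g2icm23, g2icm24, g2icm25, g2icm26, g2icm30, g2icm31, g2icm32, g2icm33, g2icm34, g2icm35, g2icm36, g2icm40, g2icm41, g2icm42, g2icm43, g2icm44, g2icm45, g2icm46, g2icm50, g2icm51, g2icm52, g2icm53, g2icm54, g2icm55, g2icm56, g2icm60, g2icm61, g2icm62, g2icm63, g2icm64, g2icm65, g2icm66,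
    g2ice00, g2ice01, g2ice02, g2ice03, g2ice04, g2ice05, g2ice06, g2ice10, g2ice11, g2ice12, g2ice13, g2ice14, g2ice15, g2ice16, g2ice20, g2ice21, g2ice22, g2ice23, g2ice24, g2ice25, g2ice26, g2ice30, g2ice31, g2ice32, g2ice33, g2ice34, g2ice35, g2ice36, g2ice40, g2ice41, g2ice42, g2ice43, g2ice44, g2ice45, g2ice46, g2ice50, g2ice51, g2ice52, g2ice53, g2ice54, g2ice55, g2ice56, g2ice60, g2ice61, g2ice62, g2ice63, g2ice64, g2ice65, g2ice66,
    mul_zero, zero_mul, mul_one, one_mul, sub_zero, zero_sub, add_zero, zero_add,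
    smul_zero, zero_smul, neg_zero, neg_neg, mul_neg, neg_mul, smul_neg,
    mul_smul_comm, smul_mul_assoc, smul_smul, sub_self,
    g2_aI_iota, g2_aI_iota_mul, g2_aI_eps, g2_aI_eps_mul, g2_aI_aM, map_one, map_zero, smul_eq_mul]
  ring

set_option maxHeartbeats 2000000 in
lemma g2coeff3 (u v : V7) :
    ExteriorAlgebra.algebraMapInv (ic (Pi.single (6:Fin 7) 1) (ic (Pi.single (5:Fin 7) 1) (ic (Pi.single (4:Fin 7) 1) (ic (Pi.single (2:Fin 7) 1) (ic (Pi.single (1:Fin 7) 1) (ic (Pi.single (0:Fin 7) 1) (ExteriorAlgebra.ι ℝ u * (ExteriorAlgebra.ι ℝ v * sigma0))))))))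
      = (u 0 * v 5 - u 5 * v 0) + (u 1 * v 4 - u 4 * v 1) + (u 2 * v 6 - u 6 * v 2) := by
  simp only [sigma0, mul_add, mul_sub, mul_assoc, map_add, map_sub, map_smul, map_neg,
    g2_ic_basis_mul, g2_ic_basis_iota,
    g2icm00, g2icm01, g2icm02, g2icm03, g2icm04, g2icm05, g2icm06, g2icm10, g2icm11, g2icm12, g2icm13, g2icm14, g2icm15, g2icm16, g2icm20, g2icm21, g2icm22, g2icm23, g2icm24, g2icm25, g2icm26, g2icm30, g2icm31, g2icm32, g2icm33, g2icm34, g2icm35, g2icm36, g2icm40, g2icm41, g2icm42, g2icm43, g2icm44, g2icm45, g2icm46, g2icm50, g2icm51, g2icm52, g2icm53, g2icm54, g2icm55, g2icm56, g2icm60, g2icm61, g2icm62, g2icm63, g2icm64, g2icm65, g2icm66,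
    g2ice00, g2ice01, g2ice02, g2ice03, g2ice04, g2ice05, g2ice06, g2ice10, g2ice11, g2ice12, g2ice13, g2ice14, g2ice15, g2ice16, g2ice20, g2ice21, g2ice22, g2ice23, g2ice24, g2ice25, g2ice26, g2ice30, g2ice31, g2ice32, g2ice33, g2ice34, g2ice35, g2ice36, g2ice40, g2ice41, g2ice42, g2ice43, g2ice44, g2ice45, g2ice46, g2ice50, g2ice51, g2ice52, g2ice53, g2ice54, g2ice55, g2ice56, g2ice60, g2ice61, g2ice62, g2ice63, g2ice64, g2ice65, g2ice66,
    mul_zero, zero_mul, mul_one, one_mul, sub_zero, zero_sub, add_zero, zero_add,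
    smul_zero, zero_smul, neg_zero, neg_neg, mul_neg, neg_mul, smul_neg,
    mul_smul_comm, smul_mul_assoc, smul_smul, sub_self,
    g2_aI_iota, g2_aI_iota_mul, g2_aI_eps, g2_aI_eps_mul, g2_aI_aM, map_one, map_zero, smul_eq_mul]
  ring

set_option maxHeartbeats 2000000 in
lemma g2coeff4 (u v : V7) :
    ExteriorAlgebra.algebraMapInv (ic (Pi.single (6:Fin 7) 1) (ic (Pi.single (5:Fin 7) 1) (ic (Pi.single (3:Fin 7) 1) (ic (Pi.single (2:Fin 7) 1) (ic (Pi.single (1:Fin 7) 1) (ic (Pi.single (0:Fin 7) 1) (ExteriorAlgebra.ι ℝ u * (ExteriorAlgebra.ι ℝ v * sigma0))))))))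
      = -(u 0 * v 2 - u 2 * v 0) + (u 1 * v 3 - u 3 * v 1) + (u 5 * v 6 - u 6 * v 5) := by
  simp only [sigma0, mul_add, mul_sub, mul_assoc, map_add, map_sub, map_smul, map_neg,
    g2_ic_basis_mul, g2_ic_basis_iota,
    g2icm00, g2icm01, g2icm02, g2icm03, g2icm04, g2icm05, g2icm06, g2icm10, g2icm11, g2icm12, g2icm13, g2icm14, g2icm15, g2icm16, g2icm20, g2icm21, g2icm22, g2icm23, g2icm24, g2icm25, g2icm26, g2icm30, g2icm31, g2icm32, g2icm33, g2icm34, g2icm35, g2icm36, g2icm40, g2icm41, g2icm42, g2icm43, g2icm44, g2icm45, g2icm46, g2icm50, g2icm51, g2icm52, g2icm53, g2icm54, g2icm55, g2icm56, g2icm60, g2icm61, g2icm62, g2icm63, g2icm64, g2icm65, g2icm66,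
    g2ice00, g2ice01, g2ice02, g2ice03, g2ice04, g2ice05, g2ice06, g2ice10, g2ice11, g2ice12, g2ice13, g2ice14, g2ice15, g2ice16, g2ice20, g2ice21, g2ice22, g2ice23, g2ice24, g2ice25, g2ice26, g2ice30, g2ice31, g2ice32, g2ice33, g2ice34, g2ice35, g2ice36, g2ice40, g2ice41, g2ice42, g2ice43, g2ice44, g2ice45, g2ice46, g2ice50, g2ice51, g2ice52, g2ice53, g2ice54, g2ice55, g2ice56, g2ice60, g2ice61, g2ice62, g2ice63, g2ice64, g2ice65, g2ice66,
    mul_zero, zero_mul, mul_one, one_mul, sub_zero, zero_sub, add_zero, zero_add,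
    smul_zero, zero_smul, neg_zero, neg_neg, mul_neg, neg_mul, smul_neg,
    mul_smul_comm, smul_mul_assoc, smul_smul, sub_self,
    g2_aI_iota, g2_aI_iota_mul, g2_aI_eps, g2_aI_eps_mul, g2_aI_aM, map_one, map_zero, smul_eq_mul]
  ring

set_option maxHeartbeats 2000000 in
lemma g2coeff5 (u v : V7) :
    ExteriorAlgebra.algebraMapInv (ic (Pi.single (6:Fin 7) 1) (ic (Pi.single (4:Fin 7) 1) (ic (Pi.single (3:Fin 7) 1) (ic (Pi.single (2:Fin 7) 1) (ic (Pi.single (1:Fin 7) 1) (ic (Pi.single (0:Fin 7) 1) (ExteriorAlgebra.ι ℝ u * (ExteriorAlgebra.ι ℝ v * sigma0))))))))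
      = -(u 0 * v 3 - u 3 * v 0) - (u 1 * v 2 - u 2 * v 1) + (u 4 * v 6 - u 6 * v 4) := by
  simp only [sigma0, mul_add, mul_sub, mul_assoc, map_add, map_sub, map_smul, map_neg,
    g2_ic_basis_mul, g2_ic_basis_iota,
    g2icm00, g2icm01, g2icm02, g2icm03, g2icm04, g2icm05, g2icm06, g2icm10, g2icm11, g2icm12, g2icm13, g2icm14, g2icm15, g2icm16, g2icm20, g2icm21, g2icm22, g2icm23, g2icm24, g2icm25, g2icm26, g2icm30, g2icm31, g2icm32, g2icm33, g2icm34, g2icm35, g2icm36, g2icm40, g2icm41, g2icm42, g2icm43, g2icm44, g2icm45, g2icm46, g2icm50, g2icm51, g2icm52, g2icm53, g2icm54, g2icm55, g2icm56, g2icm60, g2icm61, g2icm62, g2icm63, g2icm64, g2icm65, g2icm66,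
    g2ice00, g2ice01, g2ice02, g2ice03, g2ice04, g2ice05, g2ice06, g2ice10, g2ice11, g2ice12, g2ice13, g2ice14, g2ice15, g2ice16, g2ice20, g2ice21, g2ice22, g2ice23, g2ice24, g2ice25, g2ice26, g2ice30, g2ice31, g2ice32, g2ice33, g2ice34, g2ice35, g2ice36, g2ice40, g2ice41, g2ice42, g2ice43, g2ice44, g2ice45, g2ice46, g2ice50, g2ice51, g2ice52, g2ice53, g2ice54, g2ice55, g2ice56, g2ice60, g2ice61, g2ice62, g2ice63, g2ice64, g2ice65, g2ice66,
    mul_zero, zero_mul, mul_one, one_mul, sub_zero, zero_sub, add_zero, zero_add,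
    smul_zero, zero_smul, neg_zero, neg_neg, mul_neg, neg_mul, smul_neg,
    mul_smul_comm, smul_mul_assoc, smul_smul, sub_self,
    g2_aI_iota, g2_aI_iota_mul, g2_aI_eps, g2_aI_eps_mul, g2_aI_aM, map_one, map_zero, smul_eq_mul]
  ring

set_option maxHeartbeats 2000000 in
lemma g2coeff6 (u v : V7) :
    ExteriorAlgebra.algebraMapInv (ic (Pi.single (5:Fin 7) 1) (ic (Pi.single (4:Fin 7) 1) (ic (Pi.single (3:Fin 7) 1) (ic (Pi.single (2:Fin 7) 1) (ic (Pi.single (1:Fin 7) 1) (ic (Pi.single (0:Fin 7) 1) (ExteriorAlgebra.ι ℝ u * (ExteriorAlgebra.ι ℝ v * sigma0))))))))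
      = (u 0 * v 1 - u 1 * v 0) + (u 2 * v 3 - u 3 * v 2) + (u 4 * v 5 - u 5 * v 4) := by
  simp only [sigma0, mul_add, mul_sub, mul_assoc, map_add, map_sub, map_smul, map_neg,
    g2_ic_basis_mul, g2_ic_basis_iota,
    g2icm00, g2icm01, g2icm02, g2icm03, g2icm04, g2icm05, g2icm06, g2icm10, g2icm11, g2icm12, g2icm13, g2icm14, g2icm15, g2icm16, g2icm20, g2icm21, g2icm22, g2icm23, g2icm24, g2icm25, g2icm26, g2icm30, g2icm31, g2icm32, g2icm33, g2icm34, g2icm35, g2icm36, g2icm40, g2icm41, g2icm42, g2icm43, g2icm44, g2icm45, g2icm46, g2icm50, g2icm51, g2icm52, g2icm53, g2icm54, g2icm55, g2icm56, g2icm60, g2icm61, g2icm62, g2icm63, g2icm64, g2icm65, g2icm66,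
    g2ice00, g2ice01, g2ice02, g2ice03, g2ice04, g2ice05, g2ice06, g2ice10, g2ice11, g2ice12, g2ice13, g2ice14, g2ice15, g2ice16, g2ice20, g2ice21, g2ice22, g2ice23, g2ice24, g2ice25, g2ice26, g2ice30, g2ice31, g2ice32, g2ice33, g2ice34, g2ice35, g2ice36, g2ice40, g2ice41, g2ice42, g2ice43, g2ice44, g2ice45, g2ice46, g2ice50, g2ice51, g2ice52, g2ice53, g2ice54, g2ice55, g2ice56, g2ice60, g2ice61, g2ice62, g2ice63, g2ice64, g2ice65, g2ice66,
    mul_zero, zero_mul, mul_one, one_mul, sub_zero, zero_sub, add_zero, zero_add,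
    smul_zero, zero_smul, neg_zero, neg_neg, mul_neg, neg_mul, smul_neg,
    mul_smul_comm, smul_mul_assoc, smul_smul, sub_self,
    g2_aI_iota, g2_aI_iota_mul, g2_aI_eps, g2_aI_eps_mul, g2_aI_aM, map_one, map_zero, smul_eq_mul]
  ring


lemma g2_map_eq_zero (A : V7 ≃ₗ[ℝ] V7) {x : E7}
    (h : ExteriorAlgebra.map A.toLinearMap x = 0) : x = 0 := by
  have h2 := congrArg (ExteriorAlgebra.map A.symm.toLinearMap) h
  rw [map_zero, ← AlgHom.comp_apply, ExteriorAlgebra.map_comp_map] at h2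
  have hid : (A.symm.toLinearMap ∘ₗ A.toLinearMap) = LinearMap.id := by
    ext y
    simp
  rw [hid, ExteriorAlgebra.map_id] at h2
  simpa using h2

lemma g2_mem_deg4 (f : V7 →ₗ[ℝ] V7) : ExteriorAlgebra.map f sigma0 ∈ deg 4 := by
  have hR : ∀ x : V7, ExteriorAlgebra.ι ℝ x ∈
      LinearMap.range (ExteriorAlgebra.ι ℝ : V7 →ₗ[ℝ] E7) := fun x => ⟨x, rfl⟩
  have h4 : ∀ a b c d : V7, ExteriorAlgebra.ι ℝ a * ExteriorAlgebra.ι ℝ b *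
      ExteriorAlgebra.ι ℝ c * ExteriorAlgebra.ι ℝ d ∈ deg 4 := by
    intro a b c d
    have p1 : ExteriorAlgebra.ι ℝ a ∈
        LinearMap.range (ExteriorAlgebra.ι ℝ : V7 →ₗ[ℝ] E7) ^ 1 := by
      rw [pow_one]; exact hR a
    have p2 := Submodule.mul_mem_mul p1 (hR b)
    rw [← pow_succ] at p2
    have p3 := Submodule.mul_mem_mul p2 (hR c)
    rw [← pow_succ] at p3
    have p4 := Submodule.mul_mem_mul p3 (hR d)
    rw [← pow_succ] at p4
    exact p4
  rw [sigma0]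
  simp only [ε, map_add, map_sub, map_mul, ExteriorAlgebra.map_apply_ι]
  exact Submodule.sub_mem _ (Submodule.sub_mem _ (Submodule.sub_mem _
    (Submodule.add_mem _ (Submodule.add_mem _ (Submodule.add_mem _
      (h4 _ _ _ _) (h4 _ _ _ _)) (h4 _ _ _ _)) (h4 _ _ _ _))
    (h4 _ _ _ _)) (h4 _ _ _ _)) (h4 _ _ _ _)

lemma g2_sandwich (x y : V7) (a b : E7) :
    ExteriorAlgebra.ι ℝ x * (ExteriorAlgebra.ι ℝ y *
      (ExteriorAlgebra.ι ℝ x * a + ExteriorAlgebra.ι ℝ y * b)) = 0 := by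
  have hs : ExteriorAlgebra.ι ℝ y * ExteriorAlgebra.ι ℝ x
      = -(ExteriorAlgebra.ι ℝ x * ExteriorAlgebra.ι ℝ y) :=
    eq_neg_of_add_eq_zero_left (ExteriorAlgebra.ι_add_mul_swap y x)
  rw [mul_add, ← mul_assoc (ExteriorAlgebra.ι ℝ y) (ExteriorAlgebra.ι ℝ x) a, hs,
    ← mul_assoc (ExteriorAlgebra.ι ℝ y) (ExteriorAlgebra.ι ℝ y) b,
    ExteriorAlgebra.ι_sq_zero, zero_mul, add_zero, neg_mul, mul_neg,
    ← mul_assoc (ExteriorAlgebra.ι ℝ x) (ExteriorAlgebra.ι ℝ x * ExteriorAlgebra.ι ℝ y) a,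
    ← mul_assoc (ExteriorAlgebra.ι ℝ x) (ExteriorAlgebra.ι ℝ x) (ExteriorAlgebra.ι ℝ y),
    ExteriorAlgebra.ι_sq_zero, zero_mul, zero_mul, neg_zero]

lemma g2_expand (w : V7) : ExteriorAlgebra.ι ℝ w = ∑ a : Fin 7, w a • ε a := by
  have h : w = ∑ a : Fin 7, w a • (Pi.single a 1 : V7) := by
    funext j
    simp [Finset.sum_apply, Pi.single_apply]
  conv_lhs => rw [h]
  rw [map_sum]
  simp only [map_smul, ε]

lemma g2_half (S : E7) (h : S + S = 0) : S = 0 := by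
  have h3 : ((2:ℝ)) • S = 0 := by rw [two_smul]; exact h
  have h4 : ((2:ℝ)⁻¹ * 2) • S = 0 := by rw [mul_smul, h3, smul_zero]
  rwa [show ((2:ℝ)⁻¹ * 2) = 1 by norm_num, one_smul] at h4

lemma g2_iota_mul_eq_zero (u v : V7) (hsym : ∀ a b : Fin 7, u a * v b = u b * v a) :
    ExteriorAlgebra.ι ℝ u * ExteriorAlgebra.ι ℝ v = 0 := by
  rw [g2_expand u, g2_expand v, Finset.sum_mul_sum]
  have key : ∀ a b : Fin 7, (u a • ε a) * (v b • ε b) + (u b • ε b) * (v a • ε a) = 0 := by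
    intro a b
    have h0 : (ε a) * ε b + ε b * ε a = 0 :=
      ExteriorAlgebra.ι_add_mul_swap (Pi.single a 1) (Pi.single b 1)
    rw [smul_mul_smul_comm, smul_mul_smul_comm, ← hsym a b, ← smul_add, h0, smul_zero]
  have h2 : ((∑ a : Fin 7, ∑ b : Fin 7, (u a • ε a) * (v b • ε b))
      + (∑ a : Fin 7, ∑ b : Fin 7, (u a • ε a) * (v b • ε b))) = 0 := by
    nth_rewrite 2 [Finset.sum_comm]
    rw [← Finset.sum_add_distrib]
    refine Finset.sum_eq_zero fun a _ => ?_
    rw [← Finset.sum_add_distrib]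
    refine Finset.sum_eq_zero fun b _ => ?_
    exact key a b
  exact g2_half _ h2

lemma g2_eps01_ne_zero : (ε 0 * ε 1 : E7) ≠ 0 := by
  intro h
  have h2 := congrArg (fun z => (ExteriorAlgebra.algebraMapInv
    (ic (Pi.single (1:Fin 7) 1) (ic (Pi.single (0:Fin 7) 1) z)) : ℝ)) h
  simp only [g2icm00, g2ice10, g2ice11, mul_zero, sub_zero, map_zero, map_one,
    g2_aI_aM] at h2
  exact one_ne_zero h2


set_option maxHeartbeats 8000000 in
/-- second obstruction: let `g` be a 7-dimensional Lie algebra, given by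
structure equations `d e^i = dg i ∈ Λ²g*` with `d² = 0`, and extended to the
Chevalley–Eilenberg differential `D` on `Λ•g*`.  If every closed 4-form lies in
`⟨e^1,e^2⟩ ∧ Λ³g*` (i.e. is of the form `e^1∧α + e^2∧β` with `α, β ∈ Λ³g*`), then `g`
admits no coclosed `G₂`-structure: there is no positive 3-form `φ` with
`d(*_φ φ) = 0`.  Since `φ ↦ *_φ φ` is a double cover of the positive 4-forms, this is
formalized as: there is no closed positive (stable) 4-form `σ = *_φ φ`. -/
theorem stmt4_second_obstruction (dg : Fin 7 → E7) (hdg : ∀ i, dg i ∈ deg 2)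
    (D : E7 →ₗ[ℝ] E7) (hD : IsCE dg D) (hD2 : D ∘ₗ D = 0)
    (hclosed : ∀ κ ∈ deg 4, D κ = 0 →
      ∃ α ∈ deg 3, ∃ β ∈ deg 3, κ = ε 0 * α + ε 1 * β) :
    ¬ ∃ σ : E7, Positive4 σ ∧ D σ = 0 := by
  rintro ⟨σ, ⟨A, hA⟩, hDσ⟩
  obtain ⟨α, hα, β, hβ, hσ⟩ := hclosed σ (by rw [← hA]; exact g2_mem_deg4 A.toLinearMap) hDσ
  set u : V7 := A.symm (Pi.single 0 1) with hu
  set v : V7 := A.symm (Pi.single 1 1) with hv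
  have hAu : A.toLinearMap u = Pi.single 0 1 := A.apply_symm_apply _
  have hAv : A.toLinearMap v = Pi.single 1 1 := A.apply_symm_apply _
  have hzero : ε 0 * (ε 1 * σ) = 0 := by
    rw [hσ]; exact g2_sandwich _ _ α β
  have hmap : ExteriorAlgebra.map A.toLinearMap
      (ExteriorAlgebra.ι ℝ u * (ExteriorAlgebra.ι ℝ v * sigma0)) = 0 := by
    rw [map_mul, map_mul, ExteriorAlgebra.map_apply_ι, ExteriorAlgebra.map_apply_ι,
      hAu, hAv, hA]
    exact hzero
  have hX : ExteriorAlgebra.ι ℝ u * (ExteriorAlgebra.ι ℝ v * sigma0) = 0 :=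
    g2_map_eq_zero A hmap
  have E0 : (u 1 * v 6 - u 6 * v 1) - (u 2 * v 4 - u 4 * v 2) + (u 3 * v 5 - u 5 * v 3) = 0 := by
    have h := (g2coeff0 u v).symm
    rw [hX] at h
    simp only [map_zero] at h
    exact h
  have E1 : (u 0 * v 6 - u 6 * v 0) - (u 2 * v 5 - u 5 * v 2) - (u 3 * v 4 - u 4 * v 3) = 0 := by
    have h := (g2coeff1 u v).symm
    rw [hX] at h
    simp only [map_zero] at h
    exact h
  have E2 : (u 0 * v 4 - u 4 * v 0) - (u 1 * v 5 - u 5 * v 1) + (u 3 * v 6 - u 6 * v 3) = 0 := by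
    have h := (g2coeff2 u v).symm
    rw [hX] at h
    simp only [map_zero] at h
    exact h
  have E3 : (u 0 * v 5 - u 5 * v 0) + (u 1 * v 4 - u 4 * v 1) + (u 2 * v 6 - u 6 * v 2) = 0 := by
    have h := (g2coeff3 u v).symm
    rw [hX] at h
    simp only [map_zero] at h
    exact h
  have E4 : -(u 0 * v 2 - u 2 * v 0) + (u 1 * v 3 - u 3 * v 1) + (u 5 * v 6 - u 6 * v 5) = 0 := by
    have h := (g2coeff4 u v).symm
    rw [hX] at h
    simp only [map_zero] at h
    exact h
  have E5 : -(u 0 * v 3 - u 3 * v 0) - (u 1 * v 2 - u 2 * v 1) + (u 4 * v 6 - u 6 * v 4) = 0 := by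
    have h := (g2coeff5 u v).symm
    rw [hX] at h
    simp only [map_zero] at h
    exact h
  have E6 : (u 0 * v 1 - u 1 * v 0) + (u 2 * v 3 - u 3 * v 2) + (u 4 * v 5 - u 5 * v 4) = 0 := by
    have h := (g2coeff6 u v).symm
    rw [hX] at h
    simp only [map_zero] at h
    exact h
  have hsum : (u 0 * v 1 - u 1 * v 0) ^ 2 + (u 0 * v 2 - u 2 * v 0) ^ 2 + (u 0 * v 3 - u 3 * v 0) ^ 2 + (u 0 * v 4 - u 4 * v 0) ^ 2 + (u 0 * v 5 - u 5 * v 0) ^ 2 + (u 0 * v 6 - u 6 * v 0) ^ 2 + (u 1 * v 2 - u 2 * v 1) ^ 2 + (u 1 * v 3 - u 3 * v 1) ^ 2 + (u 1 * v 4 - u 4 * v 1) ^ 2 + (u 1 * v 5 - u 5 * v 1) ^ 2 + (u 1 * v 6 - u 6 * v 1) ^ 2 + (u 2 * v 3 - u 3 * v 2) ^ 2 + (u 2 * v 4 - u 4 * v 2) ^ 2 + (u 2 * v 5 - u 5 * v 2) ^ 2 + (u 2 * v 6 - u 6 * v 2) ^ 2 + (u 3 * v 4 - u 4 * v 3) ^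 2 + (u 3 * v 5 - u 5 * v 3) ^ 2 + (u 3 * v 6 - u 6 * v 3) ^ 2 + (u 4 * v 5 - u 5 * v 4) ^ 2 + (u 4 * v 6 - u 6 * v 4) ^ 2 + (u 5 * v 6 - u 6 * v 5) ^ 2 = 0 := by
    linear_combination ((u 1 * v 6 - u 6 * v 1) - (u 2 * v 4 - u 4 * v 2) + (u 3 * v 5 - u 5 * v 3)) * E0 + ((u 0 * v 6 - u 6 * v 0) - (u 2 * v 5 - u 5 * v 2) - (u 3 * v 4 - u 4 * v 3)) * E1 + ((u 0 * v 4 - u 4 * v 0) - (u 1 * v 5 - u 5 * v 1) + (u 3 * v 6 - u 6 * v 3)) * E2 + ((u 0 * v 5 - u 5 * v 0) + (u 1 * v 4 - u 4 * v 1) + (u 2 * v 6 - u 6 * v 2)) * E3 + (-(u 0 * v 2 - u 2 * v 0) + (u 1 * v 3 - u 3 * v 1) + (u 5 * v 6 - u 6 * v 5)) * E4 + (-(u 0 * v 3 - u 3 * v 0) - (u 1 * v 2 - u 2 * v 1) + (u 4 * v 6 - u 6 * v 4)) * E5 + ((u 0 * v 1 - u 1 * v 0) + (u 2 * v 3 -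 u 3 * v 2) + (u 4 * v 5 - u 5 * v 4)) * E6
  have hsum2 : ∑ a : Fin 7, ∑ b : Fin 7, (u a * v b - u b * v a)^2 = 0 := by
    simp only [Fin.sum_univ_seven]
    linear_combination (2:ℝ) * hsum
  have hsym : ∀ a b : Fin 7, u a * v b = u b * v a := by
    intro a b
    have h1 := (Finset.sum_eq_zero_iff_of_nonneg
      (fun a _ => Finset.sum_nonneg (fun b _ => sq_nonneg (u a * v b - u b * v a)))).mp hsum2
    have h2 := (Finset.sum_eq_zero_iff_of_nonneg
      (fun b _ => sq_nonneg (u a * v b - u b * v a))).mp (h1 a (Finset.mem_univ a))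
    have h3 := h2 b (Finset.mem_univ b)
    have h4 := (pow_eq_zero_iff two_ne_zero).mp h3
    linarith [h4]
  have hS : ExteriorAlgebra.ι ℝ u * ExteriorAlgebra.ι ℝ v = 0 :=
    g2_iota_mul_eq_zero u v hsym
  have hE : (ε 0 : E7) * ε 1 = 0 := by
    have h := congrArg (ExteriorAlgebra.map A.toLinearMap) hS
    rw [map_mul, map_zero, ExteriorAlgebra.map_apply_ι, ExteriorAlgebra.map_apply_ι,
      hAu, hAv] at h
    exact h
  exact g2_eps01_ne_zero hE
end
end

section
/- Let g be the Lie algebra 23457B with structure equations de^1=de^2=0, de^3=-e^{12}, de^4=-e^{13}, de^5=-e^{14}, de^6=-e^{25}+e^{34}, de^7=-e^{23}. Then for every closed 4-form ρ ∈ Λ⁴g*, writing ρ̂ for the 3-vector with ι_{ρ̂}(e^{1234567})=ρ, the quantity (1/6)·ι_{e^1}ρ̂ ∧ ι_{e^1}ρ̂ ∧ ρ̂ vanishes (i.e., the (1,1)-entry of the associated symmetric matrix B_ρ is zero). -/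
noncomputable section
set_option maxHeartbeats 4000000
set_option synthInstance.maxHeartbeats 1000000

/-- Structure equations of the Lie algebra `23457B`:
`de^1 = de^2 = 0`, `de^3 = -e^{12}`, `de^4 = -e^{13}`, `de^5 = -e^{14}`,
`de^6 = -e^{25}+e^{34}`, `de^7 = -e^{23}`. -/
def dg23457B : Fin 7 → E7 :=
  ![0, 0, -(ε 0 * ε 1), -(ε 0 * ε 2), -(ε 0 * ε 3),
    -(ε 1 * ε 4) + ε 2 * ε 3, -(ε 1 * ε 2)]


section Aux

lemma eps_sq (i : Fin 7) : ε i * ε i = 0 := ExteriorAlgebra.ι_sq_zero _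
lemma eps_swap (i j : Fin 7) : ε i * ε j = -(ε j * ε i) :=
  eq_neg_of_add_eq_zero_left (ExteriorAlgebra.ι_add_mul_swap _ _)
lemma eps_comm (i j : Fin 7) (_ : j < i) : ε i * ε j = -(ε j * ε i) := eps_swap i j
lemma eps_comm' (i j : Fin 7) (_ : j < i) (y : E7) :
    ε i * (ε j * y) = -(ε j * (ε i * y)) := by
  rw [← mul_assoc, eps_swap, neg_mul, mul_assoc]
lemma eps_sq' (i : Fin 7) (y : E7) : ε i * (ε i * y) = 0 := by
  rw [← mul_assoc, eps_sq, zero_mul]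

def g3 (p : Fin 7 × Fin 7 × Fin 7) : E7 :=
  if p.1 < p.2.1 ∧ p.2.1 < p.2.2 then ε p.1 * (ε p.2.1 * ε p.2.2) else 0

lemma key3 (i j k : Fin 7) : ε i * (ε j * ε k) ∈ Submodule.span ℝ (Set.range g3) := by
  have ms : ∀ x y z : Fin 7, x < y → y < z →
      ε x * (ε y * ε z) ∈ Submodule.span ℝ (Set.range g3) := by
    intro x y z h1 h2
    exact Submodule.subset_span ⟨(x,y,z), by simp [g3, h1, h2]⟩
  rcases lt_trichotomy i j with hij | rfl | hij
  · rcases lt_trichotomy j k with hjk | rfl | hjk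
    · exact ms _ _ _ hij hjk
    · rw [eps_sq, mul_zero]; exact zero_mem _
    · rcases lt_trichotomy i k with hik | rfl | hik
      · rw [eps_swap j k, mul_neg]; exact neg_mem (ms _ _ _ hik hjk)
      · rw [eps_swap j i, mul_neg, eps_sq', neg_zero]; exact zero_mem _
      · rw [eps_swap j k, mul_neg, eps_comm' i k hik, neg_neg]
        exact ms _ _ _ hik hij
  · rw [eps_sq']; exact zero_mem _
  · rcases lt_trichotomy i k with hik | rfl | hik
    · rw [eps_comm' i j hij]; exact neg_mem (ms _ _ _ hij hik)
    · rw [eps_swap j i, mul_neg, eps_sq', neg_zero]; exact zero_mem _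
    · rcases lt_trichotomy j k with hjk | rfl | hjk
      · rw [eps_comm' i j hij, eps_swap i k, mul_neg, neg_neg]
        exact ms _ _ _ hjk hik
      · rw [eps_sq j, mul_zero]; exact zero_mem _
      · rw [eps_comm' i j hij, eps_swap i k, mul_neg, neg_neg, eps_comm' j k hjk]
        exact neg_mem (ms _ _ _ hjk hij)

lemma iota_eq_sum (w : V7) : ExteriorAlgebra.ι ℝ w = ∑ i, w i • ε i := by
  have hw : w = ∑ i, w i • (Pi.single i 1 : V7) := by
    funext j
    simp [Pi.single_apply]
  conv_lhs => rw [hw]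
  simp [ε]

lemma span3 : deg 3 ≤ Submodule.span ℝ (Set.range g3) := by
  rw [deg]
  show ⋀[ℝ]^3 V7 ≤ _
  rw [← ExteriorAlgebra.ιMulti_span_fixedDegree]
  apply Submodule.span_le.2
  rintro x ⟨v, rfl⟩
  rw [ExteriorAlgebra.ιMulti_apply]
  simp only [List.ofFn_succ, List.ofFn_zero, List.prod_cons, List.prod_nil, mul_one,
    Fin.succ_zero_eq_one]
  rw [iota_eq_sum, iota_eq_sum, iota_eq_sum]
  simp only [Finset.sum_mul, Finset.mul_sum, smul_mul_assoc, mul_smul_comm]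
  refine Submodule.sum_mem _ fun i _ => Submodule.smul_mem _ _
    (Submodule.sum_mem _ fun j _ => Submodule.smul_mem _ _
      (Submodule.sum_mem _ fun k _ => Submodule.smul_mem _ _ (key3 _ _ _)))

lemma dualize_single (j i : Fin 7) :
    dualize (Pi.single j 1) (Pi.single i 1) = if j = i then 1 else 0 := by
  have := (Pi.basisFun ℝ (Fin 7)).toDual_apply j i
  simpa [dualize] using this

lemma ic_eps_mul (j i : Fin 7) (y : E7) :
    ic (Pi.single j 1) (ε i * y)
      = (if j = i then y else 0) - ε i * ic (Pi.single j 1) y := by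
  rw [ic, ε, CliffordAlgebra.contractLeft_ι_mul, dualize_single]
  split <;> simp

lemma ic_eps (j i : Fin 7) :
    ic (Pi.single j 1) (ε i) = if j = i then 1 else 0 := by
  rw [ic, ε, CliffordAlgebra.contractLeft_ι, dualize_single]
  split <;> simp

lemma contra_eps (i : Fin 7) : contra (ε i) = ic (Pi.single i 1) := by
  rw [contra, ε, ExteriorAlgebra.lift_ι_apply]; rfl

lemma dgv0 : dg23457B 0 = 0 := rfl
lemma dgv1 : dg23457B 1 = 0 := rfl
lemma dgv2 : dg23457B 2 = -(ε 0 * ε 1) := rfl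
lemma dgv3 : dg23457B 3 = -(ε 0 * ε 2) := rfl
lemma dgv4 : dg23457B 4 = -(ε 0 * ε 3) := rfl
lemma dgv5 : dg23457B 5 = -(ε 1 * ε 4) + ε 2 * ε 3 := rfl
lemma dgv6 : dg23457B 6 = -(ε 1 * ε 2) := rfl

lemma fs_1_0 : Fin.succ (0 : Fin 1) = (1 : Fin 2) := rfl
lemma fs_2_0 : Fin.succ (0 : Fin 2) = (1 : Fin 3) := rfl
lemma fs_2_1 : Fin.succ (1 : Fin 2) = (2 : Fin 3) := rfl
lemma fs_3_0 : Fin.succ (0 : Fin 3) = (1 : Fin 4) := rfl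
lemma fs_3_1 : Fin.succ (1 : Fin 3) = (2 : Fin 4) := rfl
lemma fs_3_2 : Fin.succ (2 : Fin 3) = (3 : Fin 4) := rfl
lemma fs_4_0 : Fin.succ (0 : Fin 4) = (1 : Fin 5) := rfl
lemma fs_4_1 : Fin.succ (1 : Fin 4) = (2 : Fin 5) := rfl
lemma fs_4_2 : Fin.succ (2 : Fin 4) = (3 : Fin 5) := rfl
lemma fs_4_3 : Fin.succ (3 : Fin 4) = (4 : Fin 5) := rfl
lemma fs_5_0 : Fin.succ (0 : Fin 5) = (1 : Fin 6) := rfl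
lemma fs_5_1 : Fin.succ (1 : Fin 5) = (2 : Fin 6) := rfl
lemma fs_5_2 : Fin.succ (2 : Fin 5) = (3 : Fin 6) := rfl
lemma fs_5_3 : Fin.succ (3 : Fin 5) = (4 : Fin 6) := rfl
lemma fs_5_4 : Fin.succ (4 : Fin 5) = (5 : Fin 6) := rfl
lemma fs_6_0 : Fin.succ (0 : Fin 6) = (1 : Fin 7) := rfl
lemma fs_6_1 : Fin.succ (1 : Fin 6) = (2 : Fin 7) := rfl
lemma fs_6_2 : Fin.succ (2 : Fin 6) = (3 : Fin 7) := rfl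
lemma fs_6_3 : Fin.succ (3 : Fin 6) = (4 : Fin 7) := rfl
lemma fs_6_4 : Fin.succ (4 : Fin 6) = (5 : Fin 7) := rfl
lemma fs_6_5 : Fin.succ (5 : Fin 6) = (6 : Fin 7) := rfl

lemma smul_one_eq_zero {c : ℝ} (h : c • (1 : E7) = 0) : c = 0 := by
  have h2 : algebraMap ℝ E7 c = algebraMap ℝ E7 0 := by
    simpa [Algebra.algebraMap_eq_smul_one] using h
  exact (ExteriorAlgebra.algebraMap_leftInverse V7).injective h2

end Aux

/-- fourth obstruction on `23457B`: for every closed 4-form `ρ` on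
`23457B`, writing `ρ̂` for the 3-vector with `ι_{ρ̂}(e^{1234567}) = ρ`, the `(1,1)`
entry `(1/6)·ι_{e_1}ρ̂ ∧ ι_{e_1}ρ̂ ∧ ρ̂` of the matrix `B_ρ` vanishes. -/
theorem stmt6_23457B_B11_zero (D : E7 →ₗ[ℝ] E7) (hD : IsCE dg23457B D) :
    ∀ ρ ∈ deg 4, D ρ = 0 → ∀ r ∈ deg 3, contra r vol7 = ρ →
      (6 : ℝ)⁻¹ • (ic (Pi.single 0 1) r * ic (Pi.single 0 1) r * r) = 0 := by
  intro ρ hρdeg hclosed r hrdeg hρ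
  obtain ⟨a, ha⟩ := (Submodule.mem_span_range_iff_exists_fun ℝ).mp (span3 hrdeg)
  have hr' : r = ∑ p : Fin 7 × Fin 7 × Fin 7, a p • g3 p := ha.symm
  simp only [Fintype.sum_prod_type, Fin.sum_univ_succ, Fin.sum_univ_zero, g3] at hr'
  simp (config := { decide := true }) only [reduceIte, smul_zero, add_zero, zero_add] at hr'
  simp only [fs_1_0, fs_2_0, fs_2_1, fs_3_0, fs_3_1, fs_3_2, fs_4_0, fs_4_1, fs_4_2, fs_4_3, fs_5_0, fs_5_1, fs_5_2, fs_5_3, fs_5_4, fs_6_0, fs_6_1, fs_6_2, fs_6_3, fs_6_4, fs_6_5] at hr'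
  have hcl : D (contra r vol7) = 0 := by rw [hρ]; exact hclosed
  rw [hr'] at hcl
  simp (config := { decide := true }) only [map_add, map_smul, map_mul, map_neg, map_sub,
    LinearMap.add_apply, LinearMap.smul_apply, Module.End.mul_apply, LinearMap.neg_apply,
    LinearMap.sub_apply, contra_eps, vol7, mul_assoc, ic_eps_mul, ic_eps, reduceIte,
    mul_zero, zero_mul, sub_zero, zero_sub, mul_one, one_mul, mul_neg, neg_mul, neg_neg,
    mul_sub, sub_self, map_zero, smul_zero, zero_add, add_zero, eps_comm, eps_comm',
    eps_sq, eps_sq', neg_zero, sub_neg_eq_add, neg_sub] at hcl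
  have hDe : ∀ i : Fin 7, D (ε i) = dg23457B i := by
    intro i
    have h := hD.2 i 1
    simpa [hD.1] using h
  simp (config := { decide := true }) only [map_add, map_smul, map_neg, map_sub, hD.2, hDe,
    dgv0, dgv1, dgv2, dgv3, dgv4, dgv5, dgv6, mul_add, add_mul, mul_sub, sub_mul,
    mul_zero, zero_mul, sub_zero, zero_sub, mul_one, one_mul, mul_neg, neg_mul, neg_neg,
    mul_assoc, smul_add, smul_sub, smul_neg, smul_zero, zero_add, add_zero, neg_zero,
    sub_neg_eq_add, sub_self, eps_comm, eps_comm', eps_sq, eps_sq', map_zero] at hcl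

  have ext : ∀ (s1 s2 s3 s4 s5 : Fin 7) (x : E7), x = 0 →
      ic (Pi.single s5 1) (ic (Pi.single s4 1) (ic (Pi.single s3 1)
        (ic (Pi.single s2 1) (ic (Pi.single s1 1) x)))) = 0 := by
    intro s1 s2 s3 s4 s5 x hx
    rw [hx]; simp
  have E1 := ext 0 1 2 5 6 _ hcl
  have E2 := ext 0 1 3 4 5 _ hcl
  have E3 := ext 0 1 4 5 6 _ hcl
  have E4 := ext 0 2 4 5 6 _ hcl
  have E5 := ext 0 1 3 5 6 _ hcl
  have E6 := ext 1 2 3 4 6 _ hcl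
  have E7' := ext 0 1 2 4 5 _ hcl
  have E8 := ext 0 2 3 4 6 _ hcl
  simp (config := { decide := true }) only [map_add, map_sub, map_neg, map_smul, map_zero,
    ic_eps_mul, ic_eps, reduceIte, mul_zero, zero_mul, sub_zero, zero_sub, mul_one, one_mul,
    mul_neg, neg_mul, neg_neg, mul_sub, sub_self, smul_zero, zero_add, add_zero, neg_zero,
    sub_neg_eq_add, smul_neg] at E1 E2 E3 E4 E5 E6 E7' E8
  simp only [← neg_smul, ← add_smul, ← sub_smul] at E1 E2 E3 E4 E5 E6 E7' E8
  have z012 : a (0,1,2) = 0 := smul_one_eq_zero E4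
  have z016 : a (0,1,6) = 0 := smul_one_eq_zero E2
  have z123 : a (1,2,3) = 0 := smul_one_eq_zero E8
  have z024 : a (0,2,4) = 0 := by have := smul_one_eq_zero E1; linarith
  have z013 : a (0,1,3) = 0 := by have := smul_one_eq_zero E3; linarith
  have z014 : a (0,1,4) = 0 := by
    have h1 := smul_one_eq_zero E5; have h2 := smul_one_eq_zero E6; linarith
  have z023 : a (0,2,3) = 0 := by
    have h1 := smul_one_eq_zero E5; have h2 := smul_one_eq_zero E6; linarith
  have z026 : a (0,2,6) = 0 := by have := smul_one_eq_zero E7'; linarith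
  rw [z012, z013, z014, z016, z023, z024, z026] at hr'
  simp only [zero_smul, zero_add, add_zero] at hr'
  rw [hr']
  simp (config := { decide := true }) only [map_add, map_smul, map_neg, map_sub, map_zero,
    ic_eps_mul, ic_eps, reduceIte, mul_zero, zero_mul, sub_zero, zero_sub, mul_one, one_mul,
    mul_neg, neg_mul, neg_neg, mul_sub, sub_self, smul_zero, zero_add, add_zero, neg_zero,
    sub_neg_eq_add, smul_neg, zero_smul, smul_smul, smul_mul_assoc, mul_smul_comm,
    mul_add, add_mul, smul_add, smul_sub, mul_assoc, eps_comm, eps_comm', eps_sq, eps_sq',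
    add_neg_cancel, neg_add_cancel]
end
end
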